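/- Let E and E' be types, step : E → E → Prop, d' : E' → E' → Prop, and M : E → E' → Prop. Assume the backward-preservation step law: for all a b : E with step a b, and for every b' : E' with M b b', there exists a' : E' with M a a' and b' reachable from a' by the reflexive-transitive closure of d'. Let es : List E be a nonempty list that is a chain for step, and assume there exists e' with M (es.getLast) e'. Then for all indices i ≤ j < es.length, there exist a' and b' in E' such that M (es.get i) a', M (es.get j) b', and b' is reachable from a' by the reflexive-transitive closure of d'. In particular every element of es has an image under M. (This is the abstract core of the paper's Theorem 'Observation protection' and of condition (iii) in its Lemmas on monolithic, decoupled and observation-opacification preservation: when observation events are organized along an opaque chain terminating in a transformation-preserved event, every observation event on the chain is preserved, and the happens-before ordering between any two observation events on the chain is preserved in the transformed program.) -/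

import Mathlib

/-- Abstract core of the theorem "Observation protection": along an opaque
chain whose last event is preserved, every event is preserved and the
happens-before ordering between any two events on the chain is reproduced
as a dependence chain between their images. -/
theorem observation_protection {E E' : Type*}
    (step : E → E → Prop) (d' : E' → E' → Prop) (M : E → E' → Prop)
    (hstep : ∀ a b : E, step a b → ∀ b' : E', M b b' →
      ∃ a' : E', M a a' ∧ Relation.ReflTransGen d' a' b')
    (es : List E) (h : es ≠ []) (hchain : es.Chain' step)
    (hlast : ∃ e' : E', M (es.getLast h) e') :
    (∀ i j : Fin es.length, i ≤ j →
      ∃ a' b' : E', M (es.get i) a' ∧ M (es.get j) b' ∧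
        Relation.ReflTransGen d' a' b') ∧
    (∀ e ∈ es, ∃ e' : E', M e e') := by
  have hc : ∀ (k : ℕ) (hk : k + 1 < es.length),
      step (es.get ⟨k, by omega⟩) (es.get ⟨k + 1, hk⟩) := by
    rw [show es.Chain' step ↔ es.IsChain step from Iff.rfl, List.isChain_iff_getElem] at hchain
    intro k hk
    exact hchain k (by omega)
  have back : ∀ (n : ℕ) (i j : Fin es.length), (i : ℕ) + n = (j : ℕ) →
      ∀ b', M (es.get j) b' →
      ∃ a', M (es.get i) a' ∧ Relation.ReflTransGen d' a' b' := by
    intro n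
    induction n with
    | zero =>
      intro i j hij b' hb'
      have : i = j := Fin.ext (by omega)
      subst this
      exact ⟨b', hb', Relation.ReflTransGen.refl⟩
    | succ n ih =>
      intro i j hij b' hb'
      have hk : (i : ℕ) + n + 1 < es.length := by omega
      have hj : j = ⟨(i : ℕ) + n + 1, hk⟩ := Fin.ext (by simp only [Fin.val_mk]; omega)
      have hs := hc ((i : ℕ) + n) hk
      rw [hj] at hb'
      obtain ⟨m', hm', hrt⟩ := hstep _ _ hs b' hb'
      obtain ⟨a', ha', hrt'⟩ := ih i ⟨(i : ℕ) + n, by omega⟩ rfl m' hm'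
      exact ⟨a', ha', hrt'.trans hrt⟩
  obtain ⟨e', he'⟩ := hlast
  have hlen : es.length - 1 < es.length :=
    Nat.sub_lt (List.length_pos_iff.mpr h) one_pos
  have hlast' : M (es.get ⟨es.length - 1, hlen⟩) e' := by
    rwa [List.getLast_eq_getElem] at he'
  have himg : ∀ j : Fin es.length, ∃ b', M (es.get j) b' ∧
      Relation.ReflTransGen d' b' e' := by
    intro j
    exact back (es.length - 1 - (j : ℕ)) j ⟨es.length - 1, hlen⟩
      (by simp only [Fin.val_mk]; omega) e' hlast'
  constructor
  · intro i j hij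
    obtain ⟨b', hb', _⟩ := himg j
    obtain ⟨a', ha', hrt⟩ := back ((j : ℕ) - (i : ℕ)) i j (by omega) b' hb'
    exact ⟨a', b', ha', hb', hrt⟩
  · intro e he
    obtain ⟨k, hk⟩ := List.get_of_mem he
    obtain ⟨b', hb', _⟩ := himg k
    exact ⟨b', hk ▸ hb'⟩
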